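/- Generalized Pythagorean identity: for 1 < p, q < ∞ and all x ∈ ℝ, |sin_{p,q}(x)|^q + |cos_{p,q}(x)|^p = 1, where cos_{p,q} = (sin_{p,q})'. -/

import Mathlib

open Set MeasureTheory intervalIntegral Filter

namespace Stmt12

noncomputable def g (p q : ℝ) (t : ℝ) : ℝ := (1 - t ^ q) ^ (-(1 / p))
noncomputable def F (p q : ℝ) (y : ℝ) : ℝ := ∫ t in (0:ℝ)..y, g p q t

variable {p q : ℝ}

lemma g_contAt (hp : 1 < p) (hq : 1 < q) {t : ℝ} (ht : t ∈ Ioo (-1:ℝ) 1) :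
    ContinuousAt (g p q) t := by
  have h1 : t ^ q < 1 := by
    calc t ^ q ≤ |t ^ q| := le_abs_self _
    _ ≤ |t| ^ q := Real.abs_rpow_le_abs_rpow t q
    _ < 1 := Real.rpow_lt_one (abs_nonneg t) (abs_lt.2 ⟨ht.1, ht.2⟩) (by linarith)
  have h2 : ContinuousAt (fun t : ℝ => 1 - t ^ q) t :=
    continuousAt_const.sub (Real.continuous_rpow_const (by linarith)).continuousAt
  exact h2.rpow_const (Or.inl (sub_ne_zero.2 h1.ne'))

lemma g_pos (hp : 1 < p) (hq : 1 < q) {t : ℝ} (ht : t ∈ Ico (0:ℝ) 1) : 0 < g p q t :=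
  Real.rpow_pos_of_pos (by have := Real.rpow_lt_one ht.1 ht.2 (by linarith : (0:ℝ) < q); linarith) _

lemma g_nonneg (hq : 1 < q) {t : ℝ} (ht : t ∈ Icc (0:ℝ) 1) : 0 ≤ g p q t :=
  Real.rpow_nonneg (by have := Real.rpow_le_one ht.1 ht.2 (by linarith : (0:ℝ) ≤ q); linarith) _

lemma g_meas : Measurable (g p q) := by unfold g; fun_prop

lemma g_int (hp : 1 < p) (hq : 1 < q) : IntervalIntegrable (g p q) volume 0 1 := by
  have hexp : (-1 : ℝ) < -(1/p) := by
    have h1 : 1/p < 1 := by rw [div_lt_one (by linarith)]; linarith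
    linarith
  have hbound : IntervalIntegrable (fun t : ℝ => (1 - t) ^ (-(1/p))) volume 0 1 := by
    have := (intervalIntegrable_rpow' (a := 0) (b := 1) hexp).comp_sub_left 1
    simpa using this.symm
  refine hbound.mono_fun' (g_meas.aestronglyMeasurable.restrict) ?_
  rw [uIoc_of_le (by norm_num : (0:ℝ) ≤ 1)]
  filter_upwards [ae_restrict_mem measurableSet_Ioc] with t ht
  have hpexp : -(1/p) < 0 := by
    have : 0 < 1/p := by positivity
    linarith
  rcases eq_or_lt_of_le ht.2 with h1 | h1
  · have hg0 : g p q t = 0 := by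
      unfold g
      rw [h1, Real.one_rpow, sub_self, Real.zero_rpow hpexp.ne]
    rw [hg0, h1, sub_self, Real.zero_rpow hpexp.ne, norm_zero]
  · have htq : t ^ q ≤ t := by
      have := Real.rpow_le_rpow_of_exponent_ge ht.1 h1.le (by linarith : (1:ℝ) ≤ q)
      rwa [Real.rpow_one] at this
    have h2 : ‖g p q t‖ = g p q t := by
      rw [Real.norm_eq_abs, abs_of_nonneg (g_nonneg hq ⟨ht.1.le, ht.2⟩)]
    rw [h2]
    exact Real.rpow_le_rpow_of_nonpos (by linarith) (by linarith) hpexp.le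

lemma g_int' (hp : 1 < p) (hq : 1 < q) {b : ℝ} (hb : b ∈ Icc (0:ℝ) 1) :
    IntervalIntegrable (g p q) volume 0 b :=
  (g_int hp hq).mono_set (by rw [uIcc_of_le hb.1, uIcc_of_le (by norm_num : (0:ℝ) ≤ 1)]; exact Icc_subset_Icc le_rfl hb.2)

lemma F_zero : F p q 0 = 0 := integral_same

lemma F_strictMonoOn (hp : 1 < p) (hq : 1 < q) : StrictMonoOn (F p q) (Icc 0 1) := by
  intro a ha b hb hab
  have h1 : IntervalIntegrable (g p q) volume 0 a := g_int' hp hq ha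
  have h2 : IntervalIntegrable (g p q) volume a b :=
    (g_int hp hq).mono_set (by
      rw [uIcc_of_le hab.le, uIcc_of_le (by norm_num : (0:ℝ) ≤ 1)]
      exact Icc_subset_Icc ha.1 hb.2)
  have hpos : 0 < ∫ t in a..b, g p q t :=
    intervalIntegral_pos_of_pos_on h2
      (fun x hx => g_pos hp hq ⟨le_trans ha.1 hx.1.le, lt_of_lt_of_le hx.2 hb.2⟩) hab
  have hadd := integral_add_adjacent_intervals h1 h2
  show F p q a < F p q b
  unfold F
  rw [← hadd]
  linarith

lemma F_contOn (hp : 1 < p) (hq : 1 < q) : ContinuousOn (F p q) (Icc 0 1) := by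
  have := continuousOn_primitive_interval' (g_int hp hq) left_mem_uIcc
  rwa [uIcc_of_le (by norm_num : (0:ℝ) ≤ 1)] at this

lemma F_hasDeriv (hp : 1 < p) (hq : 1 < q) {b : ℝ} (hb : b ∈ Ico (0:ℝ) 1) :
    HasDerivAt (F p q) (g p q b) b :=
  integral_hasDerivAt_right (g_int' hp hq ⟨hb.1, hb.2.le⟩)
    g_meas.stronglyMeasurable.stronglyMeasurableAtFilter
    (g_contAt hp hq ⟨by linarith [hb.1], hb.2⟩)

end Stmt12

/-- generalized Pythagorean identity
|sin_{p,q}(x)|^q + |cos_{p,q}(x)|^p = 1 for all x ∈ ℝ, where cos_{p,q} = (sin_{p,q})'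
and sin_{p,q} is the 2π_{p,q}-periodic odd function, even about π_{p,q}/2, inverting
y ↦ ∫₀^y (1-t^q)^{-1/p} dt on [0, π_{p,q}/2]. -/
theorem stmt12 (p q : ℝ) (hp : 1 < p) (hq : 1 < q) (sn : ℝ → ℝ) (π₀ : ℝ)
    (hπ : π₀ = 2 * ∫ t in (0:ℝ)..1, (1 - t ^ q) ^ (-(1 / p)))
    (hodd : ∀ x, sn (-x) = -sn x)
    (hper : ∀ x, sn (x + 2 * π₀) = sn x)
    (hsym : ∀ x, sn (π₀ - x) = sn x)
    (hinv : ∀ y ∈ Set.Icc (0:ℝ) 1,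
      sn (∫ t in (0:ℝ)..y, (1 - t ^ q) ^ (-(1 / p))) = y) :
    ∀ x : ℝ, |sn x| ^ q + |deriv sn x| ^ p = 1 := by
  intro x
  have hp0 : (0:ℝ) < p := by linarith
  have hq0 : (0:ℝ) < q := by linarith
  set Fq := Stmt12.F p q with hFq
  -- basic facts about F and sn
  have hF1 : Fq 1 = π₀ / 2 := by
    rw [hπ]; show (∫ t in (0:ℝ)..1, Stmt12.g p q t) = _; unfold Stmt12.g; ring
  have hsnF : ∀ b ∈ Set.Icc (0:ℝ) 1, sn (Fq b) = b := fun b hb => hinv b hb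
  have hF0 : Fq 0 = 0 := Stmt12.F_zero
  have hsn0 : sn 0 = 0 := by
    have := hsnF 0 ⟨le_rfl, zero_le_one⟩; rwa [hF0] at this
  have hπpos : 0 < π₀ := by
    have h2 : (0:ℝ) < Fq 1 := by
      rw [hF0.symm]
      exact Stmt12.F_strictMonoOn hp hq ⟨le_rfl, zero_le_one⟩ ⟨zero_le_one, le_rfl⟩ one_pos
    rw [hF1] at h2; linarith
  have hFmem : ∀ c ∈ Set.Icc (0:ℝ) 1, Fq c ∈ Set.Icc 0 (π₀/2) := by
    intro c hc
    constructor
    · rw [← hF0]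
      exact (Stmt12.F_strictMonoOn hp hq).monotoneOn ⟨le_rfl, zero_le_one⟩ hc hc.1
    · rw [← hF1]
      exact (Stmt12.F_strictMonoOn hp hq).monotoneOn hc ⟨zero_le_one, le_rfl⟩ hc.2
  have hsnval : ∀ a ∈ Set.Icc 0 (π₀/2), sn a ∈ Set.Icc (0:ℝ) 1 ∧ Fq (sn a) = a := by
    intro a ha
    have hsurj := intermediate_value_Icc zero_le_one (Stmt12.F_contOn hp hq)
    rw [← hFq, hF0, hF1] at hsurj
    obtain ⟨b, hb, hFb⟩ := hsurj ha
    have : sn a = b := by rw [← hFb]; exact hsnF b hb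
    rw [this, hFb]; exact ⟨hb, rfl⟩
  have hsn_mono : StrictMonoOn sn (Set.Icc 0 (π₀/2)) := by
    intro u hu v hv huv
    obtain ⟨hbu, hFu⟩ := hsnval u hu
    obtain ⟨hbv, hFv⟩ := hsnval v hv
    by_contra hle
    push_neg at hle
    have := (Stmt12.F_strictMonoOn hp hq).monotoneOn hbv hbu hle
    rw [← hFq, hFu, hFv] at this; linarith
  have hsn_pos : ∀ a, 0 < a → a ≤ π₀/2 → 0 < sn a := by
    intro a ha0 haπ
    obtain ⟨hb, hFb⟩ := hsnval a ⟨ha0.le, haπ⟩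
    rcases eq_or_lt_of_le hb.1 with h | h
    · exfalso; rw [← h, hF0] at hFb; linarith
    · exact h
  -- derivative symmetry facts (unconditional, junk-value safe)
  have hder_even : ∀ y, deriv sn (-y) = deriv sn y := by
    intro y
    have hfun : (fun z => -sn (-z)) = sn := funext fun z => by rw [hodd z]; ring
    have h1 : deriv (fun z => -sn (-z)) y = deriv sn y := by rw [hfun]
    rw [deriv.fun_neg (f := fun z => sn (-z)), deriv_comp_neg] at h1
    linarith
  have hder_sym : ∀ y, deriv sn (π₀ - y) = -deriv sn y := by
    intro y
    have hfun : (fun z => sn (π₀ - z)) = sn := funext hsym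
    have h1 : deriv (fun z => sn (π₀ - z)) y = deriv sn y := by rw [hfun]
    rw [deriv_comp_const_sub] at h1
    linarith
  have hanti : ∀ y, sn (y + π₀) = -sn y := by
    intro y
    have h1 := hsym (-y)
    rw [sub_neg_eq_add] at h1
    rw [add_comm, h1, hodd]
  have hder_anti : ∀ y, deriv sn (y + π₀) = -deriv sn y := by
    intro y
    have hfun : (fun z => -sn (z + π₀)) = sn := funext fun z => by rw [hanti z]; ring
    have h1 : deriv (fun z => -sn (z + π₀)) y = deriv sn y := by rw [hfun]
    rw [deriv.fun_neg (f := fun z => sn (z + π₀)), deriv_comp_add_const] at h1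
    linarith
  set Q : ℝ → ℝ := fun y => |sn y| ^ q + |deriv sn y| ^ p with hQdef
  show Q x = 1
  have hQper : Function.Periodic Q π₀ := by
    intro y
    show |sn (y + π₀)| ^ q + |deriv sn (y + π₀)| ^ p = _
    rw [hanti, hder_anti, abs_neg, abs_neg]
  have hQeven : ∀ y, Q (-y) = Q y := by
    intro y
    show |sn (-y)| ^ q + |deriv sn (-y)| ^ p = _
    rw [hodd, hder_even, abs_neg]
  -- the key computation on the fundamental domain
  have key : ∀ a, 0 ≤ a → a ≤ π₀/2 → Q a = 1 := by
    intro a ha0 haπ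
    rcases eq_or_lt_of_le haπ with hE | hlt
    · -- a = π₀/2
      have hsn1 : sn a = 1 := by rw [hE, ← hF1]; exact hsnF 1 ⟨zero_le_one, le_rfl⟩
      have hd : deriv sn a = 0 := by
        have h1 := hder_sym (π₀/2)
        rw [show π₀ - π₀/2 = π₀/2 by ring] at h1
        rw [hE]; linarith
      show |sn a| ^ q + |deriv sn a| ^ p = 1
      rw [hsn1, hd, abs_one, abs_zero, Real.one_rpow, Real.zero_rpow hp0.ne']
      ring
    · -- a ∈ [0, π₀/2)
      set b := sn a with hbdef
      obtain ⟨hb, hFb⟩ := hsnval a ⟨ha0, haπ⟩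
      have hb1 : b < 1 := by
        rcases eq_or_lt_of_le hb.2 with h | h
        · exfalso; rw [h, hF1] at hFb; linarith
        · exact h
      have hgb_pos : 0 < Stmt12.g p q b := Stmt12.g_pos hp hq ⟨hb.1, hb1⟩
      set G : ℝ → ℝ := fun u => if 0 ≤ u then Fq u else -Fq (-u) with hGdef
      have hGF : ∀ u, 0 ≤ u → G u = Fq u := fun u hu => if_pos hu
      have hGneg : ∀ u, u < 0 → G u = -Fq (-u) := fun u hu => if_neg (not_le.2 hu)
      have hGd : HasDerivAt G (Stmt12.g p q b) b := by
        rcases eq_or_lt_of_le hb.1 with h0 | h0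
        · rw [hbdef, ← h0]
          have hF0d : HasDerivAt Fq (Stmt12.g p q 0) 0 := Stmt12.F_hasDeriv hp hq ⟨le_rfl, one_pos⟩
          have hright : HasDerivWithinAt G (Stmt12.g p q 0) (Set.Ici 0) 0 :=
            hF0d.hasDerivWithinAt.congr (fun y hy => hGF y hy) (hGF 0 le_rfl)
          have hL : HasDerivAt (fun u : ℝ => -Fq (-u)) (Stmt12.g p q 0) 0 := by
            have h1 : HasDerivAt (fun u : ℝ => Fq (0 - u)) (-(Stmt12.g p q 0)) 0 :=
              HasDerivAt.comp_const_sub 0 0 (by simpa using hF0d)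
            have h2 := h1.neg
            simp only [zero_sub, neg_neg] at h2
            exact h2
          have hleft : HasDerivWithinAt G (Stmt12.g p q 0) (Set.Iic 0) 0 := by
            refine hL.hasDerivWithinAt.congr (fun y hy => ?_) ?_
            · rcases eq_or_lt_of_le (Set.mem_Iic.mp hy) with h | h
              · rw [h]; rw [hGF 0 le_rfl]; simp [hF0]
              · exact hGneg y h
            · rw [hGF 0 le_rfl]; simp [hF0]
          have hu := hleft.union hright
          rw [Set.Iic_union_Ici] at hu
          exact hasDerivWithinAt_univ.mp hu
        · have hFd : HasDerivAt Fq (Stmt12.g p q b) b := Stmt12.F_hasDeriv hp hq ⟨hb.1, hb1⟩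
          refine hFd.congr_of_eventuallyEq ?_
          exact Filter.eventuallyEq_of_mem (Ioi_mem_nhds h0) (fun u hu => hGF u (le_of_lt hu))
      have hsmono : StrictMonoOn sn (Set.Icc (-(π₀/2)) (π₀/2)) := by
        intro u hu v hv huv
        rcases le_or_gt 0 u with hu0 | hu0
        · exact hsn_mono ⟨hu0, hu.2⟩ ⟨by linarith, hv.2⟩ huv
        · have hsnu : sn u = -sn (-u) := by rw [hodd u, neg_neg]
          rcases le_or_gt 0 v with hv0 | hv0
          · have h1 : 0 < sn (-u) := hsn_pos (-u) (by linarith) (by linarith [hu.1])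
            have h2 : 0 ≤ sn v := (hsnval v ⟨hv0, hv.2⟩).1.1
            rw [hsnu]; linarith
          · have hsnv : sn v = -sn (-v) := by rw [hodd v, neg_neg]
            have h3 : sn (-v) < sn (-u) :=
              hsn_mono ⟨by linarith, by linarith [hv.1]⟩ ⟨by linarith, by linarith [hu.1]⟩
                (by linarith)
            rw [hsnu, hsnv]; linarith
      have himg : Set.Ioo (-1:ℝ) 1 ⊆ sn '' Set.Icc (-(π₀/2)) (π₀/2) := by
        intro c hc
        rcases le_or_gt 0 c with hc0 | hc0
        · refine ⟨Fq c, ?_, hsnF c ⟨hc0, hc.2.le⟩⟩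
          have h4 := hFmem c ⟨hc0, hc.2.le⟩
          exact ⟨by linarith [h4.1], h4.2⟩
        · refine ⟨-Fq (-c), ?_, ?_⟩
          · have h4 := hFmem (-c) ⟨by linarith, by linarith [hc.1]⟩
            exact ⟨by linarith [h4.2], by linarith [h4.1]⟩
          · rw [hodd (Fq (-c)), hsnF (-c) ⟨by linarith, by linarith [hc.1]⟩, neg_neg]
      have hcont : ContinuousAt sn a :=
        hsmono.continuousAt_of_image_mem_nhds
          (Icc_mem_nhds (by linarith) (by linarith))
          (Filter.mem_of_superset (Ioo_mem_nhds (by linarith [hb.1]) hb1) himg)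
      have hGinv : ∀ᶠ y in nhds a, G (sn y) = y := by
        filter_upwards [Ioo_mem_nhds (show -(π₀/2) < a by linarith) hlt] with y hy
        rcases le_or_gt 0 y with hy0 | hy0
        · obtain ⟨hby, hFy⟩ := hsnval y ⟨hy0, hy.2.le⟩
          rw [hGF _ hby.1, hFy]
        · have hny : -y ∈ Set.Icc 0 (π₀/2) := ⟨by linarith, by linarith [hy.1]⟩
          obtain ⟨hby, hFy⟩ := hsnval (-y) hny
          have hpos : 0 < sn (-y) := hsn_pos (-y) (by linarith) hny.2
          have hsny : sn y = -sn (-y) := by rw [hodd y, neg_neg]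
          rw [hsny, hGneg _ (by linarith), neg_neg, hFy, neg_neg]
      have hd : HasDerivAt sn (Stmt12.g p q b)⁻¹ a :=
        HasDerivAt.of_local_left_inverse hcont (hbdef ▸ hGd) hgb_pos.ne' hGinv
      have h1q : 0 ≤ 1 - b ^ q := by
        have h5 := Real.rpow_le_one hb.1 hb.2 hq0.le; linarith
      have hginv : (Stmt12.g p q b)⁻¹ = (1 - b ^ q) ^ (1/p) := by
        show ((1 - b ^ q) ^ (-(1/p)))⁻¹ = _
        rw [Real.rpow_neg h1q, inv_inv]
      show |sn a| ^ q + |deriv sn a| ^ p = 1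
      rw [hd.deriv, hginv, ← hbdef]
      rw [abs_of_nonneg hb.1, abs_of_nonneg (Real.rpow_nonneg h1q _)]
      rw [← Real.rpow_mul h1q, one_div, inv_mul_cancel₀ hp0.ne', Real.rpow_one]
      ring

  -- reduction of arbitrary x to the fundamental domain
  have hredux : Q x = Q (x - (round (x / π₀) : ℤ) * π₀) := (hQper.sub_int_mul_eq _).symm
  set t := x - (round (x / π₀) : ℤ) * π₀ with htdef
  have habs : |t| ≤ π₀ / 2 := by
    have h1 : |x / π₀ - round (x / π₀)| ≤ 1/2 := abs_sub_round _
    have h2 : t = π₀ * (x / π₀ - round (x / π₀)) := by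
      field_simp [htdef]
      ring
    rw [h2, abs_mul, abs_of_pos hπpos]
    nlinarith [abs_nonneg (x / π₀ - (round (x / π₀) : ℤ))]
  rw [hredux]
  rcases le_or_gt 0 t with h | h
  · exact key t h (by rw [abs_of_nonneg h] at habs; linarith)
  · rw [← hQeven t]
    exact key (-t) (by linarith) (by rw [abs_of_neg h] at habs; linarith)
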